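/- Fix x ∈ ℝⁿ and 1 < K < n. With s(x)ᵢ = (Σ_{j=i}ⁿ |x|_[j])/(K−i+1), let i_x be the smallest minimizer of s(x)ᵢ over i ∈ {1,...,K}, δ(x) = s(x)_{i_x}, and define u(x) by u(x)ᵢ = |x|_[i] for i < i_x, u(x)ᵢ = δ(x) for i_x ≤ i ≤ K, u(x)ᵢ = 0 for i > K. Then u(x) is nonincreasing and u(x) majorizes |x|. -/

import Mathlib

open Finset

/-- The `i`-th largest entry (0-indexed) of the tuple `x`. -/
noncomputable def sortedDesc (n : ℕ) (x : Fin n → ℝ) : Fin n → ℝ :=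
  fun i => x (Tuple.sort x i.rev)

/-- Sum of the `k` largest entries of `x`. -/
noncomputable def topSum (n : ℕ) (x : Fin n → ℝ) (k : ℕ) : ℝ :=
  ∑ i ∈ Finset.univ.filter (fun i : Fin n => (i : ℕ) < k), sortedDesc n x i

/-- `u` majorizes `x`. -/
def Majorizes (n : ℕ) (u x : Fin n → ℝ) : Prop :=
  (∀ k, k < n → topSum n x k ≤ topSum n u k) ∧ (∑ i, x i = ∑ i, u i)

/-- `u` weakly submajorizes `x`. -/
def WeakSubmajorizes (n : ℕ) (u x : Fin n → ℝ) : Prop :=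
  ∀ k, k ≤ n → topSum n x k ≤ topSum n u k

/-- Number of nonzero components. -/
noncomputable def suppCard (n : ℕ) (x : Fin n → ℝ) : ℕ :=
  (Finset.univ.filter (fun i => x i ≠ 0)).card

lemma sortedDesc_antitone (n : ℕ) (x : Fin n → ℝ) : Antitone (sortedDesc n x) := by
  intro i j hij
  exact Tuple.monotone_sort x (Fin.rev_le_rev.mpr hij)

lemma sortedDesc_eq_self (n : ℕ) (u : Fin n → ℝ) (h : Antitone u) :
    sortedDesc n u = u := by
  have hm : Monotone (u ∘ (Fin.revPerm : Equiv.Perm (Fin n))) := by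
    intro i j hij
    exact h (Fin.rev_le_rev.mpr hij)
  have h0 := Tuple.comp_sort_eq_comp_iff_monotone.mpr hm
  funext i
  have h2 := congrFun h0 i.rev
  simpa [sortedDesc] using h2.symm

lemma sum_sortedDesc (n : ℕ) (x : Fin n → ℝ) :
    ∑ i, sortedDesc n x i = ∑ i, x i := by
  unfold sortedDesc
  rw [← Equiv.sum_comp ((Fin.revPerm : Equiv.Perm (Fin n)).trans (Tuple.sort x)) x]
  rfl

lemma filter_sum_eq (n : ℕ) (a : Fin n → ℝ) (P : ℕ → Prop) [DecidablePred P] :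
    ∑ j ∈ Finset.univ.filter (fun j : Fin n => P j.val), a j
      = ∑ j ∈ (Finset.range n).filter P, (if h : j < n then a ⟨j, h⟩ else 0) := by
  rw [Finset.sum_filter, Finset.sum_filter,
    ← Fin.sum_univ_eq_sum_range (fun m => if P m then (if h : m < n then a ⟨m, h⟩ else 0) else 0) n]
  refine Finset.sum_congr rfl fun j _ => ?_
  simp [j.isLt]

theorem ux_antitone_and_majorizes (n K : ℕ) (hK1 : 1 < K) (hKn : K < n) (x : Fin n → ℝ)
    (s : ℕ → ℝ)
    (hs : ∀ i : ℕ, s i =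
      (∑ j ∈ Finset.univ.filter (fun j : Fin n => i ≤ (j : ℕ) + 1),
        sortedDesc n (fun t => |x t|) j) / ((K : ℝ) - i + 1))
    (ix : ℕ) (hix1 : 1 ≤ ix) (hix2 : ix ≤ K)
    (hmin : ∀ j, 1 ≤ j → j ≤ K → s ix ≤ s j)
    (hleast : ∀ j, 1 ≤ j → j < ix → s ix < s j)
    (u : Fin n → ℝ)
    (hu : ∀ i : Fin n, u i =
      if (i : ℕ) + 1 < ix then sortedDesc n (fun t => |x t|) i
      else if (i : ℕ) + 1 ≤ K then s ix else 0) :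
    Antitone u ∧ Majorizes n u (fun t => |x t|) := by
  obtain ⟨c, rfl⟩ : ∃ c, ix = c + 1 := ⟨ix - 1, (Nat.succ_pred_eq_of_pos hix1).symm⟩
  set a : Fin n → ℝ := sortedDesc n (fun t => |x t|) with ha_def
  have hcK : c < K := by omega
  set A : ℕ → ℝ := fun m => if h : m < n then a ⟨m, h⟩ else 0 with hA_def
  have hA0 : ∀ m, 0 ≤ A m := by
    intro m
    simp only [hA_def]
    split
    · exact abs_nonneg _
    · exact le_refl 0
  have hAmono : ∀ {p q : ℕ}, p ≤ q → A q ≤ A p := by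
    intro p q hpq
    simp only [hA_def]
    split
    · rename_i hq
      rw [dif_pos (lt_of_le_of_lt hpq hq)]
      exact sortedDesc_antitone n (fun t => |x t|) (by exact hpq)
    · split
      · exact abs_nonneg _
      · exact le_refl 0
  -- tail sums
  set Tl : ℕ → ℝ := fun m => ∑ j ∈ Finset.Ico m n, A j with hTl_def
  have hTl0 : ∀ m, 0 ≤ Tl m := fun m => Finset.sum_nonneg fun j _ => hA0 j
  have hT : ∀ i, 1 ≤ i → s i = Tl (i - 1) / ((K : ℝ) - i + 1) := by
    intro i hi
    rw [hs i, filter_sum_eq n a (fun j => i ≤ j + 1)]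
    congr 1
    rw [show (Finset.range n).filter (fun j => i ≤ j + 1) = Finset.Ico (i - 1) n by
      ext j; simp only [mem_filter, mem_range, Finset.mem_Ico]; omega]
  have hdc : (0 : ℝ) < (K : ℝ) - c := by
    have : (c : ℝ) < K := by exact_mod_cast hcK
    linarith
  have hδeq : s (c + 1) * ((K : ℝ) - c) = Tl c := by
    have h1 := hT (c + 1) (by omega)
    rw [show (c + 1) - 1 = c from rfl] at h1
    rw [h1]
    have : (K : ℝ) - (↑(c + 1)) + 1 = (K : ℝ) - c := by push_cast; ring
    rw [this]
    field_simp
  have hδ0 : 0 ≤ s (c + 1) := by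
    nlinarith [hTl0 c]
  -- F2 : strict bound at the left boundary
  have F2 : 1 ≤ c → s (c + 1) < A (c - 1) := by
    intro hc1
    have hlt := hleast c hc1 (by omega)
    have h1 := hT c hc1
    have hsplit : Tl (c - 1) = A (c - 1) + Tl c := by
      rw [hTl_def]
      have := Finset.sum_eq_sum_Ico_succ_bot (show c - 1 < n by omega) A
      rw [show c - 1 + 1 = c by omega] at this
      exact this
    have hKc1 : (0 : ℝ) < (K : ℝ) - c + 1 := by linarith
    rw [h1, hsplit] at hlt
    have hcast : (K : ℝ) - (c : ℝ) + 1 = (K : ℝ) - (↑c) + 1 := rfl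
    rw [lt_div_iff₀ hKc1] at hlt
    nlinarith
  -- F3 : interval sums bounded by multiples of δ
  have F3 : ∀ k, c ≤ k → k ≤ K → ∑ j ∈ Finset.Ico c k, A j ≤ ((k : ℝ) - c) * s (c + 1) := by
    intro k hck hkK
    have hsplit : ∑ j ∈ Finset.Ico c k, A j + Tl k = Tl c := by
      rw [hTl_def]
      exact Finset.sum_Ico_consecutive A hck (by omega)
    by_cases hkK' : k < K
    case neg =>
      have hkeq : k = K := by omega
      subst hkeq
      nlinarith [hTl0 k]
    · have hmink := hmin (k + 1) (by omega) (by omega)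
      have h1 := hT (k + 1) (by omega)
      rw [show (k + 1) - 1 = k from rfl] at h1
      have hcast : (K : ℝ) - (↑(k + 1)) + 1 = (K : ℝ) - k := by push_cast; ring
      rw [h1, hcast] at hmink
      have hKk : (0 : ℝ) < (K : ℝ) - k := by
        have : (k : ℝ) < K := by exact_mod_cast hkK'
        linarith
      rw [le_div_iff₀ hKk] at hmink
      nlinarith
  -- normalized description of u
  have hu' : ∀ i : Fin n, u i = if (i : ℕ) < c then A i else if (i : ℕ) < K then s (c + 1) else 0 := by
    intro i
    rw [hu i]
    have hAi : A ↑i = a i := by simp [hA_def, i.isLt]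
    by_cases h1 : (i : ℕ) < c
    · rw [if_pos (by omega), if_pos h1, hAi]
    · rw [if_neg (by omega), if_neg h1]
      by_cases h2 : (i : ℕ) < K
      · rw [if_pos (by omega), if_pos h2]
      · rw [if_neg (by omega), if_neg h2]
  -- antitone
  have hanti : Antitone u := by
    intro i j hij
    have hij' : (i : ℕ) ≤ j := hij
    rw [hu' i, hu' j]
    by_cases hi1 : (i : ℕ) < c
    · rw [if_pos hi1]
      by_cases hj1 : (j : ℕ) < c
      · rw [if_pos hj1]; exact hAmono hij'
      · rw [if_neg hj1]
        by_cases hj2 : (j : ℕ) < K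
        · rw [if_pos hj2]
          exact le_trans (le_of_lt (F2 (by omega))) (hAmono (by omega))
        · rw [if_neg hj2]; exact hA0 i
    · rw [if_neg hi1, if_neg (show ¬(j : ℕ) < c by omega)]
      by_cases hj2 : (j : ℕ) < K
      · rw [if_pos hj2, if_pos (by omega)]
      · rw [if_neg hj2]
        by_cases hi2 : (i : ℕ) < K
        · rw [if_pos hi2]; exact hδ0
        · rw [if_neg hi2]
  -- ℕ-indexed version of u
  set U : ℕ → ℝ := fun m => if m < c then A m else if m < K then s (c + 1) else 0 with hU_def
  have hUtop : ∀ k, k ≤ n → topSum n u k = ∑ j ∈ Finset.range k, U j := by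
    intro k hk
    unfold topSum
    rw [sortedDesc_eq_self n u hanti, filter_sum_eq n u (fun j => j < k)]
    rw [show (Finset.range n).filter (fun j => j < k) = Finset.range k by
      ext j; simp only [mem_filter, mem_range]; omega]
    refine Finset.sum_congr rfl fun j hj => ?_
    have hjn : j < n := lt_of_lt_of_le (mem_range.mp hj) hk
    rw [dif_pos hjn, hu' ⟨j, hjn⟩]
  have hXtop : ∀ k, k ≤ n → topSum n (fun t => |x t|) k = ∑ j ∈ Finset.range k, A j := by
    intro k hk
    unfold topSum
    rw [← ha_def, filter_sum_eq n a (fun j => j < k)]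
    rw [show (Finset.range n).filter (fun j => j < k) = Finset.range k by
      ext j; simp only [mem_filter, mem_range]; omega]
  -- sums of U
  have hGU : ∀ k, c ≤ k → k ≤ K →
      ∑ j ∈ Finset.range k, U j = ∑ j ∈ Finset.range c, A j + ((k : ℝ) - c) * s (c + 1) := by
    intro k hck hkK
    rw [Finset.range_eq_Ico, ← Finset.sum_Ico_consecutive U (Nat.zero_le c) hck]
    have e1 : ∑ j ∈ Finset.Ico 0 c, U j = ∑ j ∈ Finset.range c, A j := by
      rw [← Finset.range_eq_Ico]
      refine Finset.sum_congr rfl fun j hj => ?_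
      simp only [hU_def]
      rw [if_pos (mem_range.mp hj)]
    have e2 : ∑ j ∈ Finset.Ico c k, U j = ((k : ℝ) - c) * s (c + 1) := by
      have hconst : ∀ j ∈ Finset.Ico c k, U j = s (c + 1) := by
        intro j hj
        obtain ⟨h1, h2⟩ := Finset.mem_Ico.mp hj
        simp only [hU_def]
        rw [if_neg (by omega), if_pos (by omega)]
      rw [Finset.sum_congr rfl hconst, Finset.sum_const, Nat.card_Ico, nsmul_eq_mul,
        Nat.cast_sub hck]
    rw [e1, e2, Finset.range_eq_Ico]
  have hGU2 : ∀ k, K ≤ k → ∑ j ∈ Finset.range k, U j = ∑ j ∈ Finset.range K, U j := by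
    intro k hk
    rw [Finset.range_eq_Ico,
      ← Finset.sum_Ico_consecutive U (Nat.zero_le K) hk]
    have : ∀ j ∈ Finset.Ico K k, U j = 0 := by
      intro j hj
      obtain ⟨h1, h2⟩ := Finset.mem_Ico.mp hj
      simp only [hU_def]
      rw [if_neg (by omega), if_neg (by omega)]
    rw [Finset.sum_congr rfl this, Finset.sum_const, smul_zero, add_zero, Finset.range_eq_Ico]
  -- total sum of A
  have hAtot : ∑ j ∈ Finset.range n, A j = ∑ j ∈ Finset.range c, A j + Tl c := by
    rw [hTl_def, Finset.range_eq_Ico,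
      ← Finset.sum_Ico_consecutive A (Nat.zero_le c) (by omega : c ≤ n), Finset.range_eq_Ico]
  have hUA : ∑ j ∈ Finset.range n, U j = ∑ j ∈ Finset.range n, A j := by
    rw [hGU2 n (by omega), hGU K (by omega) (le_refl K), hAtot, mul_comm, hδeq]
  refine ⟨hanti, ?_, ?_⟩
  · -- partial sums
    intro k hk
    rw [hUtop k (le_of_lt hk), hXtop k (le_of_lt hk)]
    by_cases h1 : k ≤ c
    · refine le_of_eq (Finset.sum_congr rfl fun j hj => ?_)
      simp only [hU_def]
      rw [if_pos (by have := mem_range.mp hj; omega)]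
    · by_cases h2 : k ≤ K
      · rw [hGU k (by omega) h2]
        have hsplit : ∑ j ∈ Finset.range k, A j
            = ∑ j ∈ Finset.range c, A j + ∑ j ∈ Finset.Ico c k, A j := by
          rw [Finset.range_eq_Ico,
            ← Finset.sum_Ico_consecutive A (Nat.zero_le c) (by omega : c ≤ k), Finset.range_eq_Ico]
        rw [hsplit]
        exact add_le_add le_rfl (F3 k (by omega) h2)
      · have h3 : ∑ j ∈ Finset.range k, A j ≤ ∑ j ∈ Finset.range n, A j :=
          Finset.sum_le_sum_of_subset_of_nonneg
            (Finset.range_subset_range.mpr (le_of_lt hk)) (fun j _ _ => hA0 j)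
        rw [hGU2 k (by omega), ← hGU2 n (by omega), hUA]
        exact h3
  · -- total sums
    have h1 : ∑ i, (fun t => |x t|) i = ∑ i, a i := (sum_sortedDesc n _).symm
    have h2 : ∑ i, a i = ∑ j ∈ Finset.range n, A j := by
      rw [← Fin.sum_univ_eq_sum_range A n]
      exact Finset.sum_congr rfl fun i _ => by simp [hA_def]
    have h3 : ∑ i, u i = ∑ j ∈ Finset.range n, U j := by
      rw [← Fin.sum_univ_eq_sum_range U n]
      refine Finset.sum_congr rfl fun i _ => ?_
      rw [hu' i]
    linarith [h1, h2, h3, hUA]
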